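/- Let G be an oriented graph on n vertices with minimum degree δ(G) ≥ n/2 + 1. Let P be a path and C a cycle in G that are vertex-disjoint with V(G) = V(P) ∪ V(C), such that σ_min(P) ≤ 1 and 2 ≤ |P| < δ(G). If σ_min(C) ≤ ℓ − |P| for some natural number ℓ, then G contains a Hamilton cycle C* with σ_min(C*) ≤ ℓ. -/

import Mathlib

open Function

/-- An oriented graph: an asymmetric (hence irreflexive) relation, i.e. no 2-cycles. -/
def Oriented {V : Type*} (E : V → V → Prop) : Prop := ∀ u v, E u v → ¬ E v u

/-- Adjacency in the underlying undirected graph. -/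
def UAdj {V : Type*} (E : V → V → Prop) (u v : V) : Prop := E u v ∨ E v u

/-- Degree of a vertex in the underlying undirected graph. -/
noncomputable def udeg {V : Type*} (E : V → V → Prop) (x : V) : ℕ := Nat.card {y : V // UAdj E x y}

/-- Cyclic successor of an index. -/
def cnext {m : ℕ} (i : Fin m) : Fin m := ⟨(i.val + 1) % m, Nat.mod_lt _ i.pos⟩

/-- A Hamilton cycle of an oriented graph on `Fin n`, given as a cyclic listing of
all vertices (consecutive vertices, when distinct, are joined by an edge). -/
def IsHamCycle {n : ℕ} (E : Fin n → Fin n → Prop) (c : Fin n → Fin n) : Prop :=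
  Bijective c ∧ ∀ i : Fin n, c i ≠ c (cnext i) → UAdj E (c i) (c (cnext i))

/-- Number of forward edges of a Hamilton cycle. -/
noncomputable def sigmaPlusHC {n : ℕ} (E : Fin n → Fin n → Prop) (c : Fin n → Fin n) : ℕ :=
  Nat.card {i : Fin n // E (c i) (c (cnext i))}

/-- Number of backward edges of a Hamilton cycle. -/
noncomputable def sigmaMinusHC {n : ℕ} (E : Fin n → Fin n → Prop) (c : Fin n → Fin n) : ℕ :=
  Nat.card {i : Fin n // E (c (cnext i)) (c i)}

noncomputable def sigmaMaxHC {n : ℕ} (E : Fin n → Fin n → Prop) (c : Fin n → Fin n) : ℕ :=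
  max (sigmaPlusHC E c) (sigmaMinusHC E c)

noncomputable def sigmaMinHC {n : ℕ} (E : Fin n → Fin n → Prop) (c : Fin n → Fin n) : ℕ :=
  min (sigmaPlusHC E c) (sigmaMinusHC E c)

/-- A (not necessarily spanning) cycle on `m` vertices in an oriented graph on `Fin n`. -/
def IsCycleOn {n m : ℕ} (E : Fin n → Fin n → Prop) (c : Fin m → Fin n) : Prop :=
  3 ≤ m ∧ Injective c ∧ ∀ i : Fin m, UAdj E (c i) (c (cnext i))

noncomputable def sigmaPlusCyc {n m : ℕ} (E : Fin n → Fin n → Prop) (c : Fin m → Fin n) : ℕ :=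
  Nat.card {i : Fin m // E (c i) (c (cnext i))}

noncomputable def sigmaMinusCyc {n m : ℕ} (E : Fin n → Fin n → Prop) (c : Fin m → Fin n) : ℕ :=
  Nat.card {i : Fin m // E (c (cnext i)) (c i)}

noncomputable def sigmaMaxCyc {n m : ℕ} (E : Fin n → Fin n → Prop) (c : Fin m → Fin n) : ℕ :=
  max (sigmaPlusCyc E c) (sigmaMinusCyc E c)

noncomputable def sigmaMinCyc {n m : ℕ} (E : Fin n → Fin n → Prop) (c : Fin m → Fin n) : ℕ :=
  min (sigmaPlusCyc E c) (sigmaMinusCyc E c)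

/-- A path on `m + 1` vertices (`m` edges) in an oriented graph on `Fin n`. -/
def IsPathOn {n m : ℕ} (E : Fin n → Fin n → Prop) (p : Fin (m + 1) → Fin n) : Prop :=
  Injective p ∧ ∀ i : Fin m, UAdj E (p i.castSucc) (p i.succ)

noncomputable def sigmaPlusPath {n m : ℕ} (E : Fin n → Fin n → Prop) (p : Fin (m + 1) → Fin n) : ℕ :=
  Nat.card {i : Fin m // E (p i.castSucc) (p i.succ)}

noncomputable def sigmaMinusPath {n m : ℕ} (E : Fin n → Fin n → Prop) (p : Fin (m + 1) → Fin n) : ℕ :=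
  Nat.card {i : Fin m // E (p i.succ) (p i.castSucc)}

noncomputable def sigmaMaxPath {n m : ℕ} (E : Fin n → Fin n → Prop) (p : Fin (m + 1) → Fin n) : ℕ :=
  max (sigmaPlusPath E p) (sigmaMinusPath E p)

noncomputable def sigmaMinPath {n m : ℕ} (E : Fin n → Fin n → Prop) (p : Fin (m + 1) → Fin n) : ℕ :=
  min (sigmaPlusPath E p) (sigmaMinusPath E p)

section Aux
variable {V : Type*}

open Classical in
/-- indicator of an edge -/
noncomputable def ecnt (R : V → V → Prop) (a b : V) : ℕ := if R a b then 1 else 0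

lemma ecnt_le_one (R : V → V → Prop) (a b : V) : ecnt R a b ≤ 1 := by
  unfold ecnt; split <;> omega

lemma ecnt_eq_zero {R : V → V → Prop} {a b : V} (h : ¬ R a b) : ecnt R a b = 0 := by
  unfold ecnt; simp [h]

lemma ecnt_eq_one {R : V → V → Prop} {a b : V} (h : R a b) : ecnt R a b = 1 := by
  unfold ecnt; simp [h]

/-- number of `R`-edges along consecutive pairs of a list -/
noncomputable def pcount (R : V → V → Prop) : List V → ℕ
  | [] => 0
  | [_] => 0
  | a :: b :: l => ecnt R a b + pcount R (b :: l)

/-- number of `R`-edges along cyclic consecutive pairs of a list -/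
noncomputable def ccount (R : V → V → Prop) : List V → ℕ
  | [] => 0
  | a :: l => pcount R ((a :: l) ++ [a])

@[simp] lemma pcount_nil (R : V → V → Prop) : pcount R [] = 0 := rfl
@[simp] lemma pcount_single (R : V → V → Prop) (a : V) : pcount R [a] = 0 := rfl
@[simp] lemma pcount_cons_cons (R : V → V → Prop) (a b : V) (l : List V) :
    pcount R (a :: b :: l) = ecnt R a b + pcount R (b :: l) := rfl

lemma ccount_cons (R : V → V → Prop) (a : V) (l : List V) :
    ccount R (a :: l) = pcount R ((a :: l) ++ [a]) := rfl

lemma pcount_append_mid (R : V → V → Prop) (L : List V) (b : V) (M : List V) :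
    pcount R (L ++ b :: M) = pcount R (L ++ [b]) + pcount R (b :: M) := by
  induction L with
  | nil => simp
  | cons a L ih =>
    cases L with
    | nil => simp [pcount]
    | cons a' L' =>
      simp only [List.cons_append, pcount_cons_cons] at *
      omega

lemma pcount_concat (R : V → V → Prop) (L : List V) (hL : L ≠ []) (y : V) :
    pcount R (L ++ [y]) = pcount R L + ecnt R (L.getLast hL) y := by
  induction L with
  | nil => simp at hL
  | cons a L ih =>
    cases L with
    | nil => simp [pcount]
    | cons a' L' =>
      have h' : (a' :: L') ≠ [] := by simp
      have hgl : (a :: a' :: L').getLast hL = (a' :: L').getLast h' := by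
        simp [List.getLast_cons]
      calc pcount R ((a :: a' :: L') ++ [y])
          = ecnt R a a' + pcount R ((a' :: L') ++ [y]) := by simp [pcount]
        _ = ecnt R a a' + (pcount R (a' :: L') + ecnt R ((a' :: L').getLast h') y) := by
            rw [ih h']
        _ = pcount R (a :: a' :: L') + ecnt R ((a :: a' :: L').getLast hL) y := by
            rw [hgl]; simp [pcount]; omega

lemma pcount_cons_head (R : V → V → Prop) (x : V) (L : List V) (hL : L ≠ []) :
    pcount R (x :: L) = ecnt R x (L.head hL) + pcount R L := by
  cases L with
  | nil => simp at hL
  | cons a L' => simp [pcount]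

lemma pcount_le_concat (R : V → V → Prop) (L : List V) (y : V) :
    pcount R L ≤ pcount R (L ++ [y]) := by
  cases L with
  | nil => simp
  | cons a L' => rw [pcount_concat R _ (by simp) y]; omega

lemma pcount_le_cons (R : V → V → Prop) (x : V) (L : List V) :
    pcount R L ≤ pcount R (x :: L) := by
  cases L with
  | nil => simp
  | cons a L' => simp [pcount]

lemma pcount_sandwich (R : V → V → Prop) (x y : V) (L : List V) :
    pcount R L ≤ pcount R (x :: L ++ [y]) := by
  calc pcount R L ≤ pcount R (L ++ [y]) := pcount_le_concat ..
    _ ≤ pcount R (x :: (L ++ [y])) := pcount_le_cons ..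
    _ = pcount R (x :: L ++ [y]) := by simp

lemma pcount_sandwich' (R : V → V → Prop) (x y : V) (Q : List V) (hQ : Q ≠ []) :
    pcount R (x :: Q ++ [y])
      = ecnt R x (Q.head hQ) + pcount R Q + ecnt R (Q.getLast hQ) y := by
  have h1 : (Q ++ [y]) ≠ [] := by simp
  rw [List.cons_append, pcount_cons_head R x _ h1, List.head_append_of_ne_nil hQ,
    pcount_concat R Q hQ y]
  omega

/-- cyclic count decomposition along two cut points -/
lemma ccount_decomp (R : V → V → Prop) (x y : V) (M T : List V) :
    ccount R (x :: (M ++ y :: T)) = pcount R (x :: M ++ [y]) + pcount R (y :: (T ++ [x])) := by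
  rw [ccount_cons]
  have : (x :: (M ++ y :: T)) ++ [x] = (x :: M) ++ y :: (T ++ [x]) := by simp
  rw [this, pcount_append_mid R (x :: M) y (T ++ [x])]

lemma ccount_rotate_one (R : V → V → Prop) (l : List V) :
    ccount R (l.rotate 1) = ccount R l := by
  cases l with
  | nil => simp
  | cons a l' =>
    cases l' with
    | nil => simp [List.rotate]
    | cons b l'' =>
      have hrot : (a :: b :: l'').rotate 1 = (b :: l'') ++ [a] := by
        simp [List.rotate_cons_succ, List.rotate_zero]
      rw [hrot]
      have e1 : ccount R ((b :: l'') ++ [a]) = pcount R (b :: l'' ++ [a]) + ecnt R a b := by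
        have h1 : (b :: l'') ++ [a] = b :: (l'' ++ [a]) := by simp
        rw [h1, ccount_cons]
        have h2 : (b :: (l'' ++ [a])) ++ [b] = (b :: l'' ++ [a]) ++ [b] := by simp
        rw [h2, pcount_concat R (b :: l'' ++ [a]) (by simp) b]
        have h4 : (b :: l'' ++ [a]).getLast (by simp) = a := by
          rw [List.getLast_append]; simp
        rw [h4]
        have : pcount R (b :: (l'' ++ [a])) = pcount R (b :: l'' ++ [a]) := by simp
        rw [this]
      have e2 : ccount R (a :: b :: l'') = ecnt R a b + pcount R (b :: l'' ++ [a]) := by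
        rw [ccount_cons]
        have h3 : (a :: b :: l'') ++ [a] = a :: (b :: l'' ++ [a]) := by simp
        rw [h3, pcount_cons_head R a (b :: l'' ++ [a]) (by simp)]
        simp
      rw [e1, e2]; omega

lemma ccount_rotate (R : V → V → Prop) (l : List V) (k : ℕ) :
    ccount R (l.rotate k) = ccount R l := by
  induction k generalizing l with
  | zero => simp
  | succ k ih =>
    have : l.rotate (k+1) = (l.rotate 1).rotate k := by
      rw [List.rotate_rotate]; ring_nf
    rw [this, ih, ccount_rotate_one]

lemma pcount_reverse (R : V → V → Prop) (l : List V) :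
    pcount R l.reverse = pcount (fun a b => R b a) l := by
  induction l with
  | nil => simp
  | cons a l ih =>
    cases l with
    | nil => simp
    | cons b l' =>
      have : (a :: b :: l').reverse = (b :: l').reverse ++ [a] := by simp
      rw [this, pcount_concat R _ (by simp) a, ih]
      have hb : (b :: l').reverse.getLast (by simp) = b := by
        rw [List.getLast_reverse]; simp
      rw [hb]
      have : ecnt (fun a b => R b a) a b = ecnt R b a := rfl
      simp [pcount, this]
      omega

end Aux
section Bridge
variable {V : Type*}

open Classical in
lemma natcard_subtype_fin {k : ℕ} (P : Fin k → Prop) :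
    Nat.card {i : Fin k // P i} = ∑ i : Fin k, if P i then 1 else 0 := by
  rw [Nat.card_eq_fintype_card, Fintype.card_subtype, Finset.card_filter]

lemma pcount_ofFn_sum (R : V → V → Prop) {m : ℕ} (p : Fin (m + 1) → V) :
    pcount R (List.ofFn p) = ∑ i : Fin m, ecnt R (p i.castSucc) (p i.succ) := by
  induction m with
  | zero => simp [List.ofFn_succ]
  | succ m ih =>
    rw [List.ofFn_succ (f := p), List.ofFn_succ (f := fun i : Fin (m+1) => p i.succ), pcount_cons_cons,
      ← List.ofFn_succ (f := fun i : Fin (m+1) => p i.succ), ih (fun i => p i.succ),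
      Fin.sum_univ_succ (fun i : Fin (m+1) => ecnt R (p i.castSucc) (p i.succ))]
    have h0 : ((0 : Fin (m+1)).castSucc : Fin (m+2)) = 0 := by ext; simp
    rw [h0]
    first
    | rfl
    | (congr 1
       refine Finset.sum_congr rfl fun i _ => ?_
       rw [Fin.succ_castSucc])

lemma ccount_ofFn_sum (R : V → V → Prop) {k : ℕ} (v : Fin (k+1) → V) :
    ccount R (List.ofFn v) = ∑ i : Fin (k+1), ecnt R (v i) (v (cnext i)) := by
  have hc : ccount R (List.ofFn v) = pcount R (List.ofFn v ++ [v 0]) := by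
    rw [List.ofFn_succ (f := v), ccount_cons, ← List.ofFn_succ (f := v)]
  have hsnoc : List.ofFn v ++ [v 0] = List.ofFn (Fin.snoc v (v 0) : Fin (k+2) → V) := by
    rw [List.ofFn_succ' (Fin.snoc v (v 0) : Fin (k+2) → V)]
    simp [List.concat_eq_append]
  rw [hc, hsnoc, pcount_ofFn_sum R (Fin.snoc v (v 0) : Fin (k+2) → V)]
  refine Finset.sum_congr rfl fun i _ => ?_
  have h1 : (Fin.snoc v (v 0) : Fin (k+2) → V) i.castSucc = v i := Fin.snoc_castSucc ..
  have h2 : (Fin.snoc v (v 0) : Fin (k+2) → V) i.succ = v (cnext i) := by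
    rcases Nat.lt_or_ge (i.val + 1) (k+1) with h | h
    · have he : i.succ = Fin.castSucc ⟨i.val + 1, h⟩ := by
        ext; simp
      rw [he, Fin.snoc_castSucc]
      congr 1
      ext; simp [cnext, Nat.mod_eq_of_lt h]
    · have hik : i.val = k := by have := i.isLt; omega
      have he : i.succ = Fin.last (k+1) := by ext; simp [hik]
      rw [he, Fin.snoc_last]
      congr 1
      ext; simp [cnext, hik]
  rw [h1, h2]

lemma ccount_ofFn_sum' (R : V → V → Prop) :
    ∀ {q : ℕ}, q ≠ 0 → ∀ (v : Fin q → V),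
      ccount R (List.ofFn v) = ∑ i, ecnt R (v i) (v (cnext i))
  | 0, h, _ => absurd rfl h
  | (k+1), _, v => ccount_ofFn_sum R v

lemma ccount_get_sum (R : V → V → Prop) (L : List V) (hL : L ≠ []) :
    ccount R L = ∑ i : Fin L.length, ecnt R (L.get i) (L.get (cnext i)) := by
  conv_lhs => rw [← List.ofFn_get L]
  rw [ccount_ofFn_sum' R (fun h => hL (List.length_eq_zero_iff.mp h)) L.get]

end Bridge
section Spot

lemma shift_univ {z : ℕ} [NeZero z] (S : Finset (ZMod z)) (hne : S.Nonempty)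
    (hsub : S.image (· + 1) ⊆ S) : S = Finset.univ := by
  have hinj : Function.Injective (fun x : ZMod z => x + 1) := fun x y h => by
    simpa using h
  have himg : S.image (· + 1) = S :=
    Finset.eq_of_subset_of_card_le hsub (le_of_eq (Finset.card_image_of_injective _ hinj).symm)
  have hk : ∀ k : ℕ, S.image (· + (k : ZMod z)) = S := by
    intro k; induction k with
    | zero => simp
    | succ k ih =>
      have hco : (fun x : ZMod z => x + ((k+1 : ℕ) : ZMod z))
          = (fun x : ZMod z => x + 1) ∘ (fun x : ZMod z => x + (k : ZMod z)) := by
        funext x; simp; push_cast; ring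
      rw [hco, ← Finset.image_image, ih, himg]
  obtain ⟨a, ha⟩ := hne
  refine Finset.eq_univ_of_forall fun g => ?_
  rw [← hk (g - a).val]
  refine Finset.mem_image.2 ⟨a, ha, ?_⟩
  rw [ZMod.natCast_rightInverse (g - a)]
  exact add_sub_cancel a g

lemma spot_exists {z : ℕ} [NeZero z] (A B : Finset (ZMod z)) (d : ℕ) (hd : 1 ≤ d)
    (hA : A.Nonempty) (hB : B.Nonempty)
    (hcard : z + 2 ≤ A.card + B.card + d) :
    ∃ (i : ZMod z) (k : ℕ), 1 ≤ k ∧ k ≤ d ∧ i ∈ A ∧ i + (k : ZMod z) ∈ B := by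
  by_contra hcon
  push_neg at hcon
  set W : ℕ → Finset (ZMod z) :=
    fun e => (Finset.range e).biUnion (fun j => A.image (· + ((j+1 : ℕ) : ZMod z))) with hWdef
  have hWmem : ∀ e (x : ZMod z), x ∈ W e ↔ ∃ j < e, ∃ a ∈ A, a + ((j+1 : ℕ) : ZMod z) = x := by
    intro e x
    simp only [hWdef, Finset.mem_biUnion, Finset.mem_image, Finset.mem_range]
  have hWne : ∀ e, 1 ≤ e → (W e).Nonempty := by
    intro e he
    obtain ⟨a, ha⟩ := hA
    exact ⟨a + ((1:ℕ) : ZMod z), (hWmem e _).2 ⟨0, by omega, a, ha, rfl⟩⟩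
  have hWmono : ∀ e, W e ⊆ W (e+1) := by
    intro e x hx
    rw [hWmem] at hx ⊢
    obtain ⟨j, hj, a, ha, hax⟩ := hx
    exact ⟨j, by omega, a, ha, hax⟩
  have hgrow : ∀ e, 1 ≤ e → W e = Finset.univ ∨ A.card + (e - 1) ≤ (W e).card := by
    intro e he
    induction e with
    | zero => omega
    | succ e ih =>
      rcases Nat.eq_zero_or_pos e with he0 | he1
      · subst he0
        right
        have hW1 : W 1 = A.image (· + ((1:ℕ) : ZMod z)) := by
          apply Finset.ext fun x => ?_
          rw [hWmem, Finset.mem_image]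
          constructor
          · rintro ⟨j, hj, a, ha, hax⟩
            have : j = 0 := by omega
            subst this
            exact ⟨a, ha, hax⟩
          · rintro ⟨a, ha, hax⟩
            exact ⟨0, by omega, a, ha, hax⟩
        rw [hW1, Finset.card_image_of_injective _ (fun x y h => by simpa using h)]
        omega
      · rcases ih he1 with huniv | hcd
        · left
          exact Finset.eq_univ_of_forall fun x =>
            hWmono e (by rw [huniv]; exact Finset.mem_univ x)
        · by_cases hEq : W (e+1) = W e
          · left
            have hsub : (W e).image (· + 1) ⊆ W e := by
              intro x hx
              obtain ⟨y, hy, rfl⟩ := Finset.mem_image.1 hx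
              rw [hWmem] at hy
              obtain ⟨j, hj, a, ha, hax⟩ := hy
              have : a + ((j+2 : ℕ) : ZMod z) = y + 1 := by
                rw [← hax]; push_cast; ring
              rcases Nat.lt_or_ge (j+1) e with hlt | hge
              · rw [hWmem]
                exact ⟨j+1, hlt, a, ha, this⟩
              · rw [← hEq, hWmem]
                exact ⟨j+1, by omega, a, ha, this⟩
            exact hEq.trans (shift_univ (W e) (hWne e he1) hsub)
          · right
            have hlt : (W e).card < (W (e+1)).card := by
              refine Finset.card_lt_card ?_
              exact lt_of_le_of_ne (hWmono e) (fun h => hEq h.symm)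
            omega
  have hdisj : ∀ x ∈ B, x ∉ W d := by
    intro x hx hxW
    rw [hWmem] at hxW
    obtain ⟨j, hj, a, ha, hax⟩ := hxW
    exact hcon a (j+1) (by omega) (by omega) ha (hax ▸ hx)
  rcases hgrow d hd with huniv | hcd
  · obtain ⟨b, hb⟩ := hB
    exact hdisj b hb (huniv ▸ Finset.mem_univ b)
  · have hdd : Disjoint B (W d) := Finset.disjoint_left.2 hdisj
    have hun : (B ∪ W d).card = B.card + (W d).card := Finset.card_union_of_disjoint hdd
    have hle : (B ∪ W d).card ≤ z := by
      have := Finset.card_le_univ (B ∪ W d)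
      rwa [ZMod.card] at this
    omega

end Spot
section GraphAux

/-- non-adjacency relation -/
def NAdj {n : ℕ} (E : Fin n → Fin n → Prop) : Fin n → Fin n → Prop := fun a b => ¬ UAdj E a b

lemma uadj_symm {n : ℕ} {E : Fin n → Fin n → Prop} {a b : Fin n} (h : UAdj E a b) :
    UAdj E b a := h.symm

lemma uadj_irrefl {n : ℕ} {E : Fin n → Fin n → Prop} (hE : Oriented E) (a : Fin n) :
    ¬ UAdj E a a := fun h => (hE a a (h.elim id id)) (h.elim id id)

open Classical in
lemma udeg_eq {n : ℕ} (E : Fin n → Fin n → Prop) (x : Fin n) :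
    udeg E x = (Finset.univ.filter (fun y => UAdj E x y)).card := by
  rw [udeg, Nat.card_eq_fintype_card, Fintype.card_subtype]

/-- the vertex at cyclic position `i` of the list `Z` -/
noncomputable def zget {α : Type*} (Z : List α) [NeZero Z.length] (i : ZMod Z.length) : α :=
  Z.get ⟨i.val, ZMod.val_lt i⟩

open Classical in
/-- positions of the cycle list `Z` adjacent to `v` -/
noncomputable def posSet {n : ℕ} (E : Fin n → Fin n → Prop) (Z : List (Fin n))
    [NeZero Z.length] (v : Fin n) : Finset (ZMod Z.length) :=
  Finset.univ.filter (fun i => UAdj E v (zget Z i))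

lemma zget_injective {α : Type*} {Z : List α} [NeZero Z.length] (hnd : Z.Nodup) :
    Function.Injective (zget Z) := by
  intro i j h
  have hg := List.nodup_iff_injective_get.1 hnd h
  have : i.val = j.val := congrArg Fin.val hg
  exact ZMod.val_injective _ this

open Classical in
lemma posSet_card {n : ℕ} (E : Fin n → Fin n → Prop) (Z : List (Fin n))
    [NeZero Z.length] (hnd : Z.Nodup) (v : Fin n) :
    (posSet E Z v).card = (Z.toFinset.filter (fun y => UAdj E v y)).card := by
  refine Finset.card_bij (fun i _ => zget Z i) ?_ ?_ ?_
  · intro i hi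
    simp only [posSet, Finset.mem_filter, Finset.mem_univ, true_and] at hi
    simp only [Finset.mem_filter]
    exact ⟨List.mem_toFinset.2 (List.get_mem Z _), hi⟩
  · intro i hi j hj h
    exact zget_injective hnd h
  · intro y hy
    simp only [Finset.mem_filter] at hy
    obtain ⟨j, hjy⟩ := List.mem_iff_get.1 (List.mem_toFinset.1 hy.1)
    have hval : ((j.val : ZMod Z.length)).val = j.val := by
      rw [ZMod.val_natCast]
      exact Nat.mod_eq_of_lt j.isLt
    have hz : zget Z (j.val : ZMod Z.length) = y := by
      rw [← hjy]
      unfold zget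
      congr 1
      exact Fin.ext hval
    refine ⟨(j.val : ZMod Z.length), ?_, hz⟩
    simp only [posSet, Finset.mem_filter, Finset.mem_univ, true_and]
    rw [hz]
    exact hy.2

open Classical in
lemma posSet_card_lower {n : ℕ} {E : Fin n → Fin n → Prop} (hE : Oriented E)
    (Z Q : List (Fin n)) [NeZero Z.length] (hnd : (Z ++ Q).Nodup)
    (hperm : (Z ++ Q).Perm (List.finRange n)) (v : Fin n) (hv : v ∈ Q) :
    udeg E v ≤ (posSet E Z v).card + (Q.length - 1) := by
  rw [udeg_eq, posSet_card E Z (hnd.of_append_left) v]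
  have hQnd : Q.Nodup := hnd.of_append_right
  have hsub : Finset.univ.filter (fun y => UAdj E v y) ⊆
      (Z.toFinset.filter (fun y => UAdj E v y)) ∪ (Q.toFinset.erase v) := by
    intro y hy
    rw [Finset.mem_filter] at hy
    have hymem : y ∈ Z ++ Q := hperm.mem_iff.2 (List.mem_finRange y)
    rcases List.mem_append.1 hymem with hyZ | hyQ
    · exact Finset.mem_union_left _ (Finset.mem_filter.2 ⟨List.mem_toFinset.2 hyZ, hy.2⟩)
    · refine Finset.mem_union_right _ (Finset.mem_erase.2 ⟨?_, List.mem_toFinset.2 hyQ⟩)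
      rintro rfl
      exact uadj_irrefl hE _ hy.2
  calc (Finset.univ.filter (fun y => UAdj E v y)).card
      ≤ ((Z.toFinset.filter (fun y => UAdj E v y)) ∪ (Q.toFinset.erase v)).card :=
        Finset.card_le_card hsub
    _ ≤ (Z.toFinset.filter (fun y => UAdj E v y)).card + (Q.toFinset.erase v).card :=
        Finset.card_union_le _ _
    _ ≤ (Z.toFinset.filter (fun y => UAdj E v y)).card + (Q.length - 1) := by
        have : (Q.toFinset.erase v).card = Q.toFinset.card - 1 :=
          Finset.card_erase_of_mem (List.mem_toFinset.2 hv)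
        rw [this, List.toFinset_card_of_nodup hQnd]

lemma list_decomp_two {α : Type*} (W : List α) (k : ℕ) (hk1 : 1 ≤ k) (hk : k < W.length) :
    ∃ x S y T, W = x :: S ++ y :: T ∧ S.length = k - 1 ∧
      (∀ h0 : 0 < W.length, x = W.get ⟨0, h0⟩) ∧ (∀ hk' : k < W.length, y = W.get ⟨k, hk'⟩) := by
  obtain ⟨k', rfl⟩ : ∃ k', k = k' + 1 := ⟨k-1, by omega⟩
  cases W with
  | nil => simp at hk
  | cons a W' =>
    refine ⟨a, W'.take k', (a :: W').get ⟨k'+1, hk⟩, (a :: W').drop (k'+1+1), ?_, ?_, ?_, ?_⟩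
    · conv_lhs => rw [← List.take_append_drop (k'+1) (a :: W')]
      rw [List.drop_eq_getElem_cons hk, List.take_succ_cons]
      simp
    · rw [List.length_take]
      simp at hk
      omega
    · intro h0; rfl
    · intro hk'; rfl

lemma zget_rotate {α : Type*} (Z : List α) [NeZero Z.length] (r j : ℕ)
    (hj : j < (Z.rotate r).length) :
    (Z.rotate r).get ⟨j, hj⟩ = zget Z (((j + r : ℕ)) : ZMod Z.length) := by
  rw [List.get_rotate]
  unfold zget
  congr 1
  apply Fin.ext
  simp only [ZMod.val_add, ZMod.val_natCast]
  try rw [Nat.add_mod]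

lemma perm_step {α : Type*} [DecidableEq α] (x y : α) (S T Q : List α) :
    ((x :: (Q ++ y :: T)) ++ S).Perm ((x :: (S ++ y :: T)) ++ Q) := by
  refine List.perm_iff_count.2 fun a => ?_
  simp only [List.count_append, List.count_cons, List.count_nil]
  ring

end GraphAux
section Master

theorem master {n δ : ℕ} {E R : Fin n → Fin n → Prop}
    (hE : Oriented E)
    (hδlb : ∀ x : Fin n, δ ≤ udeg E x) (hδ : n + 2 ≤ 2 * δ) :
    ∀ t (Z Q : List (Fin n)), Q.length = t →
      (Z ++ Q).Nodup → (Z ++ Q).Perm (List.finRange n) →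
      ccount (NAdj E) Z = 0 → pcount (NAdj E) Q = 0 →
      3 ≤ Z.length → t < δ →
      ∃ L : List (Fin n), L.Perm (List.finRange n) ∧ ccount (NAdj E) L = 0 ∧
        ccount R L ≤ ccount R Z + pcount R Q + 2 * ((t + 2) / 3) := by
  intro t
  induction t using Nat.strong_induction_on with
  | _ t ih =>
  intro Z Q hQlen hnd hperm hZna hQna hZ3 htδ
  classical
  rcases Nat.eq_zero_or_pos t with ht0 | ht1
  · subst ht0
    have hQnil : Q = [] := List.length_eq_zero_iff.1 hQlen
    subst hQnil
    exact ⟨Z, by simpa using hperm, hZna, by simp⟩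
  have hQne : Q ≠ [] := by
    intro h
    rw [h] at hQlen
    simp at hQlen
    omega
  haveI : NeZero Z.length := ⟨by omega⟩
  have hlen : Z.length + t = n := by
    have h1 := hperm.length_eq
    rw [List.length_append, hQlen, List.length_finRange] at h1
    exact h1
  set z := Z.length with hzdef
  set a := Q.head hQne with hadef
  set b := Q.getLast hQne with hbdef
  have haQ : a ∈ Q := List.head_mem hQne
  have hbQ : b ∈ Q := List.getLast_mem hQne
  set A := posSet E Z a with hAdef
  set B := posSet E Z b with hBdef
  have hA : δ ≤ A.card + (t - 1) := by
    have h2 := posSet_card_lower hE Z Q hnd hperm a haQ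
    rw [hQlen] at h2
    exact le_trans (hδlb a) h2
  have hB : δ ≤ B.card + (t - 1) := by
    have h2 := posSet_card_lower hE Z Q hnd hperm b hbQ
    rw [hQlen] at h2
    exact le_trans (hδlb b) h2
  obtain ⟨d, hd1, hdz, hcard, hdcase⟩ :
      ∃ d, 1 ≤ d ∧ d ≤ z - 1 ∧ z + 2 ≤ A.card + B.card + d ∧
        ((4 ≤ t ∧ d ≤ t - 2) ∨ (t ≤ 3 ∧ d = 1)) := by
    rcases le_or_gt t 3 with h3 | h4
    · exact ⟨1, le_refl 1, by omega, by omega, Or.inr ⟨h3, rfl⟩⟩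
    · rcases le_or_gt (z-1) (t-2) with hz | hz
      · exact ⟨z-1, by omega, le_refl _, by omega, Or.inl ⟨by omega, by omega⟩⟩
      · exact ⟨t-2, by omega, by omega, by omega, Or.inl ⟨by omega, le_refl _⟩⟩
  obtain ⟨i, k, hk1, hkd, hiA, hikB⟩ :=
    spot_exists A B d hd1 (Finset.card_pos.1 (by omega)) (Finset.card_pos.1 (by omega)) hcard
  have hWlen : (Z.rotate i.val).length = z := by rw [List.length_rotate]
  have hkz : k < (Z.rotate i.val).length := by omega
  obtain ⟨x, S, y, T, hWdec, hSlen, hx0, hyk⟩ := list_decomp_two (Z.rotate i.val) k hk1 hkz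
  rw [List.cons_append] at hWdec
  have hax : UAdj E a x := by
    have hiA' := hiA
    rw [hAdef, posSet, Finset.mem_filter] at hiA'
    have hxz : x = zget Z i := by
      rw [hx0 (by omega), zget_rotate Z i.val 0 (by omega)]
      congr 1
      rw [Nat.zero_add]
      exact ZMod.natCast_rightInverse i
    rw [hxz]
    exact hiA'.2
  have hby : UAdj E b y := by
    have hikB' := hikB
    rw [hBdef, posSet, Finset.mem_filter] at hikB'
    have hyz : y = zget Z (i + (k : ZMod z)) := by
      rw [hyk hkz, zget_rotate Z i.val k hkz]
      congr 1
      push_cast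
      rw [ZMod.natCast_rightInverse i]
      ring
    rw [hyz]
    exact hikB'.2
  set Z' := x :: (Q ++ y :: T) with hZ'def
  -- non-adjacency counts
  have hWna : ccount (NAdj E) (Z.rotate i.val) = 0 := by
    rw [ccount_rotate]
    exact hZna
  rw [hWdec, ccount_decomp] at hWna
  have hna1 : pcount (NAdj E) (x :: S ++ [y]) = 0 := by omega
  have hna2 : pcount (NAdj E) (y :: (T ++ [x])) = 0 := by omega
  have hexa : ecnt (NAdj E) x a = 0 := ecnt_eq_zero (fun hna => hna (uadj_symm hax))
  have heby : ecnt (NAdj E) b y = 0 := ecnt_eq_zero (fun hna => hna hby)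
  have hZ'na : ccount (NAdj E) Z' = 0 := by
    rw [hZ'def, ccount_decomp (NAdj E) x y Q T, pcount_sandwich' (NAdj E) x y Q hQne]
    rw [← hadef, ← hbdef]
    omega
  have hSna : pcount (NAdj E) S = 0 := by
    have := pcount_sandwich (NAdj E) x y S
    omega
  -- R counts
  have hZr : ccount R Z = pcount R (x :: S ++ [y]) + pcount R (y :: (T ++ [x])) := by
    rw [← ccount_rotate R Z i.val, hWdec, ccount_decomp]
  have hZ'r : ccount R Z' = pcount R (x :: Q ++ [y]) + pcount R (y :: (T ++ [x])) :=
    ccount_decomp R x y Q T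
  have hsand : pcount R (x :: Q ++ [y]) = ecnt R x a + pcount R Q + ecnt R b y := by
    rw [pcount_sandwich' R x y Q hQne, ← hadef, ← hbdef]
  have hmono : pcount R S ≤ pcount R (x :: S ++ [y]) := pcount_sandwich R x y S
  have he1 := ecnt_le_one R x a
  have he2 := ecnt_le_one R b y
  have hRbound : ccount R Z' + pcount R S ≤ ccount R Z + pcount R Q + 2 := by omega
  -- permutation bookkeeping
  have hpermstep : (Z' ++ S).Perm (Z ++ Q) := by
    refine (perm_step x y S T Q).trans ?_
    rw [← hWdec]
    exact (List.rotate_perm Z i.val).append_right Q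
  have hnd' : (Z' ++ S).Nodup := (hpermstep.nodup_iff).2 hnd
  have hperm' : (Z' ++ S).Perm (List.finRange n) := hpermstep.trans hperm
  have hSlt : S.length < t := by
    rcases hdcase with ⟨h4, hd⟩ | ⟨h3, hd⟩ <;> omega
  have hZ'3 : 3 ≤ Z'.length := by
    rw [hZ'def]
    simp
    omega
  obtain ⟨L, hL1, hL2, hL3⟩ :=
    ih S.length hSlt Z' S rfl hnd' hperm' hZ'na hSna hZ'3 (by omega)
  refine ⟨L, hL1, hL2, ?_⟩
  have hbud : 2 + 2 * ((S.length + 2) / 3) ≤ 2 * ((t + 2) / 3) := by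
    rcases hdcase with ⟨h4, hd⟩ | ⟨h3, hd⟩ <;> omega
  omega

end Master
section MoreAux

lemma ecnt_zero_iff {V : Type*} (R : V → V → Prop) (a b : V) : ecnt R a b = 0 ↔ ¬ R a b := by
  unfold ecnt
  split <;> simp_all

lemma ecnt_add_flip {V : Type*} {R : V → V → Prop} {a b : V}
    (h : R a b ∨ R b a) (hasym : ¬ (R a b ∧ R b a)) :
    ecnt R a b + ecnt (fun u v => R v u) a b = 1 := by
  have h1 : ecnt (fun u v => R v u) a b = ecnt (fun u v => R u v) b a := rfl
  rcases h with h | h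
  · rw [ecnt_eq_one h, h1, ecnt_eq_zero (fun h2 => hasym ⟨h, h2⟩)]
  · rw [ecnt_eq_zero (fun h2 => hasym ⟨h2, h⟩), h1, ecnt_eq_one h]

lemma pcount_add_flip {V : Type*} {R : V → V → Prop}
    (hor : ∀ a b : V, ¬ (¬ (R a b ∨ R b a)) → R a b ∨ R b a)
    (hasym : ∀ a b : V, ¬ (R a b ∧ R b a)) :
    ∀ l : List V, l ≠ [] → pcount (fun a b => ¬ (R a b ∨ R b a)) l = 0 →
      pcount R l + pcount (fun a b => R b a) l + 1 = l.length := by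
  intro l
  induction l with
  | nil => simp
  | cons a l ih =>
    intro _ hna
    cases l with
    | nil => simp
    | cons b l' =>
      rw [pcount_cons_cons] at hna ⊢
      rw [pcount_cons_cons]
      have hab : R a b ∨ R b a := by
        have : ecnt (fun a b => ¬ (R a b ∨ R b a)) a b = 0 := by omega
        exact hor a b ((ecnt_zero_iff _ a b).1 this)
      have := ecnt_add_flip hab (hasym a b)
      have hrec := ih (by simp) (by omega)
      simp only [List.length_cons] at hrec ⊢
      omega

open Classical in
lemma natcard_eq_pcount {V : Type*} (R : V → V → Prop) {m : ℕ} (p : Fin (m+1) → V) :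
    Nat.card {i : Fin m // R (p i.castSucc) (p i.succ)} = pcount R (List.ofFn p) := by
  rw [natcard_subtype_fin, pcount_ofFn_sum]
  refine Finset.sum_congr rfl fun i _ => ?_
  by_cases h : R (p i.castSucc) (p i.succ)
  · rw [ecnt_eq_one h, if_pos h]
  · rw [ecnt_eq_zero h, if_neg h]

open Classical in
lemma natcard_eq_ccount {V : Type*} (R : V → V → Prop) {q : ℕ} (hq : q ≠ 0) (v : Fin q → V) :
    Nat.card {i : Fin q // R (v i) (v (cnext i))} = ccount R (List.ofFn v) := by
  rw [natcard_subtype_fin, ccount_ofFn_sum' R hq v]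
  refine Finset.sum_congr rfl fun i _ => ?_
  by_cases h : R (v i) (v (cnext i))
  · rw [ecnt_eq_one h, if_pos h]
  · rw [ecnt_eq_zero h, if_neg h]

lemma cnext_cast {m k : ℕ} (h : m = k) (i : Fin m) :
    cnext (Fin.cast h i) = Fin.cast h (cnext i) := by
  subst h
  rfl

lemma list_to_ham {n : ℕ} {E : Fin n → Fin n → Prop} (L : List (Fin n))
    (hperm : L.Perm (List.finRange n)) (hna : ccount (NAdj E) L = 0) (hn : 0 < n) :
    ∃ C : Fin n → Fin n, IsHamCycle E C ∧
      sigmaPlusHC E C = ccount E L ∧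
      sigmaMinusHC E C = ccount (fun a b => E b a) L := by
  classical
  have hlen : L.length = n := by
    have := hperm.length_eq
    rwa [List.length_finRange] at this
  have hLne : L ≠ [] := by
    intro h
    rw [h] at hlen
    simp at hlen
    omega
  have hnd : L.Nodup := (hperm.nodup_iff).2 (List.nodup_finRange n)
  set C : Fin n → Fin n := fun i => L.get (Fin.cast hlen.symm i) with hCdef
  have hCget : ∀ i : Fin n, C i = L.get (Fin.cast hlen.symm i) := fun _ => rfl
  have hinj : Function.Injective C := by
    intro i j h
    have := List.nodup_iff_injective_get.1 hnd h
    exact Fin.cast_injective hlen.symm this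
  have hbij : Function.Bijective C := Finite.injective_iff_bijective.1 hinj
  have hsum := ccount_get_sum (NAdj E) L hLne
  rw [hna] at hsum
  have hall : ∀ j : Fin L.length, UAdj E (L.get j) (L.get (cnext j)) := by
    intro j
    have := (Finset.sum_eq_zero_iff.1 hsum.symm) j (Finset.mem_univ j)
    exact not_not.1 ((ecnt_zero_iff _ _ _).1 this)
  have hcycle : ∀ i : Fin n, UAdj E (C i) (C (cnext i)) := by
    intro i
    rw [hCget, hCget, ← cnext_cast]
    exact hall (Fin.cast hlen.symm i)
  have hcnt : ∀ R : Fin n → Fin n → Prop,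
      Nat.card {i : Fin n // R (C i) (C (cnext i))} = ccount R L := by
    intro R
    rw [natcard_subtype_fin, ccount_get_sum R L hLne]
    refine Fintype.sum_equiv (finCongr hlen.symm) _ _ fun i => ?_
    simp only [finCongr_apply]
    rw [hCget, hCget, ← cnext_cast]
    by_cases h : R (L.get (Fin.cast hlen.symm i)) (L.get (cnext (Fin.cast hlen.symm i)))
    · rw [if_pos h, ecnt_eq_one h]
    · rw [if_neg h, ecnt_eq_zero h]
  exact ⟨C, ⟨hbij, fun i _ => hcycle i⟩, hcnt E, hcnt (fun a b => E b a)⟩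

end MoreAux
section Splice

open Classical in
lemma mem_posSet {n : ℕ} {E : Fin n → Fin n → Prop} {Z : List (Fin n)} [NeZero Z.length]
    {v : Fin n} {i : ZMod Z.length} :
    i ∈ posSet E Z v ↔ UAdj E v (zget Z i) := by
  rw [posSet, Finset.mem_filter]
  simp

lemma splice_step {n : ℕ} {E : Fin n → Fin n → Prop} (R : Fin n → Fin n → Prop)
    (Z O : List (Fin n)) (hOne : O ≠ [])
    (hZna : ccount (NAdj E) Z = 0) (hOna : pcount (NAdj E) O = 0)
    [NeZero Z.length] (i : ZMod Z.length) (k : ℕ) (hk1 : 1 ≤ k) (hkz : k < Z.length)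
    (hx : UAdj E (O.head hOne) (zget Z i))
    (hy : UAdj E (O.getLast hOne) (zget Z (i + (k : ZMod Z.length)))) :
    ∃ Z' S, (Z' ++ S).Perm (Z ++ O) ∧ ccount (NAdj E) Z' = 0 ∧ pcount (NAdj E) S = 0 ∧
      S.length = k - 1 ∧ Z'.length = Z.length + O.length - (k - 1) ∧
      ccount R Z' + pcount R S ≤ ccount R Z + pcount R O + 2 := by
  classical
  have hkz' : k < (Z.rotate i.val).length := by rw [List.length_rotate]; omega
  obtain ⟨x, S, y, T, hWdec, hSlen, hx0, hyk⟩ := list_decomp_two (Z.rotate i.val) k hk1 hkz'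
  rw [List.cons_append] at hWdec
  have hxz : x = zget Z i := by
    rw [hx0 (by rw [List.length_rotate]; omega), zget_rotate Z i.val 0 (by rw [List.length_rotate]; omega)]
    congr 1
    rw [Nat.zero_add]
    exact ZMod.natCast_rightInverse i
  have hyz : y = zget Z (i + (k : ZMod Z.length)) := by
    rw [hyk hkz', zget_rotate Z i.val k hkz']
    congr 1
    push_cast
    rw [ZMod.natCast_rightInverse i]
    ring
  have hax : UAdj E (O.head hOne) x := by rw [hxz]; exact hx
  have hby : UAdj E (O.getLast hOne) y := by rw [hyz]; exact hy
  set Z' := x :: (O ++ y :: T) with hZ'def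
  have hWna : ccount (NAdj E) (Z.rotate i.val) = 0 := by
    rw [ccount_rotate]; exact hZna
  rw [hWdec, ccount_decomp] at hWna
  have hna1 : pcount (NAdj E) (x :: S ++ [y]) = 0 := by omega
  have hna2 : pcount (NAdj E) (y :: (T ++ [x])) = 0 := by omega
  have hexa : ecnt (NAdj E) x (O.head hOne) = 0 :=
    ecnt_eq_zero (fun hna => hna (uadj_symm hax))
  have heby : ecnt (NAdj E) (O.getLast hOne) y = 0 := ecnt_eq_zero (fun hna => hna hby)
  have hZ'na : ccount (NAdj E) Z' = 0 := by
    rw [hZ'def, ccount_decomp (NAdj E) x y O T, pcount_sandwich' (NAdj E) x y O hOne]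
    omega
  have hSna : pcount (NAdj E) S = 0 := by
    have := pcount_sandwich (NAdj E) x y S
    omega
  have hZr : ccount R Z = pcount R (x :: S ++ [y]) + pcount R (y :: (T ++ [x])) := by
    rw [← ccount_rotate R Z i.val, hWdec, ccount_decomp]
  have hZ'r : ccount R Z' = pcount R (x :: O ++ [y]) + pcount R (y :: (T ++ [x])) :=
    ccount_decomp R x y O T
  have hsand : pcount R (x :: O ++ [y])
      = ecnt R x (O.head hOne) + pcount R O + ecnt R (O.getLast hOne) y :=
    pcount_sandwich' R x y O hOne
  have hmono : pcount R S ≤ pcount R (x :: S ++ [y]) := pcount_sandwich R x y S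
  have he1 := ecnt_le_one R x (O.head hOne)
  have he2 := ecnt_le_one R (O.getLast hOne) y
  have hpermstep : (Z' ++ S).Perm (Z ++ O) := by
    refine (perm_step x y S T O).trans ?_
    rw [← hWdec]
    exact (List.rotate_perm Z i.val).append_right O
  have hlenW : (Z.rotate i.val).length = Z.length := List.length_rotate ..
  have hTlen : 1 + S.length + (1 + T.length) = Z.length := by
    rw [← hlenW, hWdec]
    simp
    omega
  refine ⟨Z', S, hpermstep, hZ'na, hSna, hSlen, ?_, by omega⟩
  rw [hZ'def]
  simp
  omega

end Splice
section SpecialAux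

lemma pcount4 {V : Type*} (R : V → V → Prop) (a b c d : V) :
    pcount R [a,b,c,d] = ecnt R a b + ecnt R b c + ecnt R c d := by
  simp [pcount]
  omega

lemma pna4 {n : ℕ} {E : Fin n → Fin n → Prop} {a b c d : Fin n}
    (h1 : UAdj E a b) (h2 : UAdj E b c) (h3 : UAdj E c d) :
    pcount (NAdj E) [a,b,c,d] = 0 := by
  rw [pcount4, ecnt_eq_zero (fun hn => hn h1), ecnt_eq_zero (fun hn => hn h2),
    ecnt_eq_zero (fun hn => hn h3)]

lemma pcount4_le_two_or {V : Type*} (R : V → V → Prop) (a b c d : V) :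
    pcount R [a,b,c,d] ≤ 2 ∨ (R a b ∧ R b c ∧ R c d) := by
  by_cases h1 : R a b
  · by_cases h2 : R b c
    · by_cases h3 : R c d
      · exact Or.inr ⟨h1, h2, h3⟩
      · left
        rw [pcount4, ecnt_eq_zero h3]
        have := ecnt_le_one R a b
        have := ecnt_le_one R b c
        omega
    · left
      rw [pcount4, ecnt_eq_zero h2]
      have := ecnt_le_one R a b
      have := ecnt_le_one R c d
      omega
  · left
    rw [pcount4, ecnt_eq_zero h1]
    have := ecnt_le_one R b c
    have := ecnt_le_one R c d
    omega

lemma redei4 {V : Type*} {R : V → V → Prop} (u1 u2 u3 u4 : V)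
    (htot : ∀ x y : V, x ∈ ([u1,u2,u3,u4] : List V) → y ∈ ([u1,u2,u3,u4] : List V) →
      x ≠ y → R x y ∨ R y x)
    (hnd : ([u1,u2,u3,u4] : List V).Nodup) :
    ∃ a b c d : V, ([a,b,c,d] : List V).Perm [u1,u2,u3,u4] ∧ R b a ∧ R c b ∧ R d c := by
  classical
  have m1 : u1 ∈ ([u1,u2,u3,u4] : List V) := by simp
  have m2 : u2 ∈ ([u1,u2,u3,u4] : List V) := by simp
  have m3 : u3 ∈ ([u1,u2,u3,u4] : List V) := by simp
  have m4 : u4 ∈ ([u1,u2,u3,u4] : List V) := by simp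
  have hd : u1 ≠ u2 ∧ u1 ≠ u3 ∧ u1 ≠ u4 ∧ u2 ≠ u3 ∧ u2 ≠ u4 ∧ u3 ≠ u4 := by
    simp [List.nodup_cons] at hnd
    tauto
  obtain ⟨n12, n13, n14, n23, n24, n34⟩ := hd
  obtain ⟨x, y, z, hperm3, d1, d2⟩ :
      ∃ x y z : V, ([x,y,z] : List V).Perm [u1,u2,u3] ∧ R y x ∧ R z y := by
    by_cases h12 : R u2 u1
    · by_cases h23 : R u3 u2
      · exact ⟨u1, u2, u3, List.Perm.refl _, h12, h23⟩
      · have h32 : R u2 u3 := (htot u2 u3 m2 m3 n23).resolve_right h23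
        by_cases h13 : R u3 u1
        · refine ⟨u1, u3, u2, ?_, h13, h32⟩
          refine List.perm_iff_count.2 fun s => ?_
          simp [List.count_cons]
          try ring
        · have h31 : R u1 u3 := (htot u1 u3 m1 m3 n13).resolve_right h13
          refine ⟨u3, u1, u2, ?_, h31, h12⟩
          refine List.perm_iff_count.2 fun s => ?_
          simp [List.count_cons]
          try ring
    · have h21 : R u1 u2 := (htot u1 u2 m1 m2 n12).resolve_right h12
      by_cases h13 : R u3 u1
      · refine ⟨u2, u1, u3, ?_, h21, h13⟩
        refine List.perm_iff_count.2 fun s => ?_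
        simp [List.count_cons]
        try ring
      · have h31 : R u1 u3 := (htot u1 u3 m1 m3 n13).resolve_right h13
        by_cases h23 : R u3 u2
        · refine ⟨u2, u3, u1, ?_, h23, h31⟩
          refine List.perm_iff_count.2 fun s => ?_
          simp [List.count_cons]
          try ring
        · have h32 : R u2 u3 := (htot u2 u3 m2 m3 n23).resolve_right h23
          refine ⟨u3, u2, u1, ?_, h32, h21⟩
          refine List.perm_iff_count.2 fun s => ?_
          simp [List.count_cons]
          try ring
  have hmx : x ∈ ([u1,u2,u3,u4] : List V) := by
    have : x ∈ ([u1,u2,u3] : List V) := hperm3.mem_iff.1 (by simp)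
    simp at this ⊢
    tauto
  have hmy : y ∈ ([u1,u2,u3,u4] : List V) := by
    have : y ∈ ([u1,u2,u3] : List V) := hperm3.mem_iff.1 (by simp)
    simp at this ⊢
    tauto
  have hmz : z ∈ ([u1,u2,u3,u4] : List V) := by
    have : z ∈ ([u1,u2,u3] : List V) := hperm3.mem_iff.1 (by simp)
    simp at this ⊢
    tauto
  have hu4x : u4 ≠ x := by
    intro h
    have : x ∈ ([u1,u2,u3] : List V) := hperm3.mem_iff.1 (by simp)
    rw [← h] at this
    simp at this
    tauto
  have hu4y : u4 ≠ y := by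
    intro h
    have : y ∈ ([u1,u2,u3] : List V) := hperm3.mem_iff.1 (by simp)
    rw [← h] at this
    simp at this
    tauto
  have hu4z : u4 ≠ z := by
    intro h
    have : z ∈ ([u1,u2,u3] : List V) := hperm3.mem_iff.1 (by simp)
    rw [← h] at this
    simp at this
    tauto
  have hperm4 : ∀ w1 w2 w3 w4 : V, ([w1,w2,w3,w4] : List V).Perm ([x,y,z] ++ [u4]) →
      ([w1,w2,w3,w4] : List V).Perm [u1,u2,u3,u4] := by
    intro w1 w2 w3 w4 h
    refine h.trans ?_
    have h2 : (([x,y,z] : List V) ++ [u4]).Perm (([u1,u2,u3] : List V) ++ [u4]) :=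
      hperm3.append_right [u4]
    refine h2.trans ?_
    refine List.perm_iff_count.2 fun s => ?_
    simp [List.count_cons, List.count_append]
    try ring
  by_cases hwx : R x u4
  · refine ⟨u4, x, y, z, hperm4 _ _ _ _ ?_, hwx, d1, d2⟩
    refine List.perm_iff_count.2 fun s => ?_
    simp [List.count_cons, List.count_append]
    try ring
  · have hxw : R u4 x := (htot u4 x m4 hmx hu4x).resolve_right hwx
    by_cases hzw : R u4 z
    · refine ⟨x, y, z, u4, hperm4 _ _ _ _ ?_, d1, d2, hzw⟩
      refine List.perm_iff_count.2 fun s => ?_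
      simp [List.count_cons, List.count_append]
      try ring
    · have hwz : R z u4 := (htot z u4 hmz m4 (fun h => hu4z h.symm)).resolve_right hzw
      by_cases hwy : R y u4
      · refine ⟨x, u4, y, z, hperm4 _ _ _ _ ?_, hxw, hwy, d2⟩
        refine List.perm_iff_count.2 fun s => ?_
        simp [List.count_cons, List.count_append]
        try ring
      · have hyw : R u4 y := (htot u4 y m4 hmy hu4y).resolve_right hwy
        refine ⟨x, y, u4, z, hperm4 _ _ _ _ ?_, d1, hyw, hwz⟩
        refine List.perm_iff_count.2 fun s => ?_
        simp [List.count_cons, List.count_append]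
        try ring

lemma shift_compl {z : ℕ} [NeZero z] (S : Finset (ZMod z)) :
    (Sᶜ).image (· + 1) = (S.image (· + 1))ᶜ := by
  ext x
  simp only [Finset.mem_image, Finset.mem_compl]
  constructor
  · rintro ⟨y, hy, rfl⟩ h
    obtain ⟨w, hw, hwx⟩ := h
    have hwy : w = y := add_right_cancel hwx
    exact hy (hwy ▸ hw)
  · intro h
    refine ⟨x - 1, ?_, sub_add_cancel x 1⟩
    intro hmem
    exact h ⟨x - 1, hmem, sub_add_cancel x 1⟩

end SpecialAux
section Rigidity

open Classical in
lemma posSet_card_lower2 {n : ℕ} {E : Fin n → Fin n → Prop} (hE : Oriented E)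
    (Z Q : List (Fin n)) [NeZero Z.length] (hnd : (Z ++ Q).Nodup)
    (hperm : (Z ++ Q).Perm (List.finRange n)) (v : Fin n) (hv : v ∈ Q)
    (u0 : Fin n) (hu0 : u0 ∈ Q) (hne : u0 ≠ v) (hnadj : ¬ UAdj E v u0) :
    udeg E v ≤ (posSet E Z v).card + (Q.length - 2) := by
  rw [udeg_eq, posSet_card E Z (hnd.of_append_left) v]
  have hQnd : Q.Nodup := hnd.of_append_right
  have hsub : Finset.univ.filter (fun y => UAdj E v y) ⊆
      (Z.toFinset.filter (fun y => UAdj E v y)) ∪ ((Q.toFinset.erase v).erase u0) := by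
    intro y hy
    rw [Finset.mem_filter] at hy
    have hymem : y ∈ Z ++ Q := hperm.mem_iff.2 (List.mem_finRange y)
    rcases List.mem_append.1 hymem with hyZ | hyQ
    · exact Finset.mem_union_left _ (Finset.mem_filter.2 ⟨List.mem_toFinset.2 hyZ, hy.2⟩)
    · refine Finset.mem_union_right _ (Finset.mem_erase.2 ⟨?_, Finset.mem_erase.2 ⟨?_, List.mem_toFinset.2 hyQ⟩⟩)
      · rintro rfl
        exact hnadj hy.2
      · rintro rfl
        exact uadj_irrefl hE _ hy.2
  have hcard2 : ((Q.toFinset.erase v).erase u0).card = Q.length - 2 := by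
    rw [Finset.card_erase_of_mem, Finset.card_erase_of_mem (List.mem_toFinset.2 hv),
      List.toFinset_card_of_nodup hQnd]
    · omega
    · exact Finset.mem_erase.2 ⟨hne, List.mem_toFinset.2 hu0⟩
  calc (Finset.univ.filter (fun y => UAdj E v y)).card
      ≤ ((Z.toFinset.filter (fun y => UAdj E v y)) ∪ ((Q.toFinset.erase v).erase u0)).card :=
        Finset.card_le_card hsub
    _ ≤ (Z.toFinset.filter (fun y => UAdj E v y)).card + ((Q.toFinset.erase v).erase u0).card :=
        Finset.card_union_le _ _
    _ = _ := by rw [hcard2]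

open Classical in
lemma rigidity {n δ : ℕ} {E : Fin n → Fin n → Prop} (hE : Oriented E)
    (hδlb : ∀ x : Fin n, δ ≤ udeg E x) (hδ : n + 2 ≤ 2 * δ)
    (Z Q : List (Fin n)) [NeZero Z.length]
    (hnd : (Z ++ Q).Nodup) (hperm : (Z ++ Q).Perm (List.finRange n)) (hQ4 : Q.length = 4)
    {a b : Fin n} (ha : a ∈ Q) (hb : b ∈ Q)
    (hnot1 : ¬ ∃ i, i ∈ posSet E Z a ∧ i + 1 ∈ posSet E Z b)
    (hnot2 : ¬ ∃ i, i ∈ posSet E Z b ∧ i + 1 ∈ posSet E Z a) :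
    ((posSet E Z a).image (· + 1)) = (posSet E Z b)ᶜ ∧
    ((posSet E Z b).image (· + 1)) = (posSet E Z a)ᶜ ∧
    (∀ u ∈ Q, u ≠ a → UAdj E a u) ∧ (∀ u ∈ Q, u ≠ b → UAdj E b u) := by
  have hzn : Z.length + 4 = n := by
    have h1 := hperm.length_eq
    rw [List.length_append, hQ4, List.length_finRange] at h1
    exact h1
  have hAlb : δ ≤ (posSet E Z a).card + 3 := by
    have h2 := posSet_card_lower hE Z Q hnd hperm a ha
    rw [hQ4] at h2
    exact le_trans (hδlb a) h2
  have hBlb : δ ≤ (posSet E Z b).card + 3 := by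
    have h2 := posSet_card_lower hE Z Q hnd hperm b hb
    rw [hQ4] at h2
    exact le_trans (hδlb b) h2
  have hinj : Function.Injective (fun x : ZMod Z.length => x + 1) := fun x y h => by
    simpa using h
  have hD1 : Disjoint ((posSet E Z a).image (· + 1)) (posSet E Z b) := by
    rw [Finset.disjoint_left]
    rintro x hx hxB
    obtain ⟨i, hiA, rfl⟩ := Finset.mem_image.1 hx
    exact hnot1 ⟨i, hiA, hxB⟩
  have hD2 : Disjoint ((posSet E Z b).image (· + 1)) (posSet E Z a) := by
    rw [Finset.disjoint_left]
    rintro x hx hxA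
    obtain ⟨i, hiB, rfl⟩ := Finset.mem_image.1 hx
    exact hnot2 ⟨i, hiB, hxA⟩
  have hcardA : ((posSet E Z a).image (· + 1)).card = (posSet E Z a).card :=
    Finset.card_image_of_injective _ hinj
  have hcardB : ((posSet E Z b).image (· + 1)).card = (posSet E Z b).card :=
    Finset.card_image_of_injective _ hinj
  have hle : (posSet E Z a).card + (posSet E Z b).card ≤ Z.length := by
    have h3 := Finset.card_le_univ (((posSet E Z a).image (· + 1)) ∪ (posSet E Z b))
    rw [Finset.card_union_of_disjoint hD1, ZMod.card, hcardA] at h3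
    exact h3
  have hsum : (posSet E Z a).card + (posSet E Z b).card = Z.length := by omega
  have h1 : (posSet E Z a).image (· + 1) = (posSet E Z b)ᶜ := by
    refine Finset.eq_of_subset_of_card_le ?_ ?_
    · intro x hx
      rw [Finset.mem_compl]
      exact Finset.disjoint_left.1 hD1 hx
    · rw [Finset.card_compl, ZMod.card, hcardA]
      omega
  have h2 : (posSet E Z b).image (· + 1) = (posSet E Z a)ᶜ := by
    refine Finset.eq_of_subset_of_card_le ?_ ?_
    · intro x hx
      rw [Finset.mem_compl]
      exact Finset.disjoint_left.1 hD2 hx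
    · rw [Finset.card_compl, ZMod.card, hcardB]
      omega
  refine ⟨h1, h2, ?_, ?_⟩
  · intro u hu hune
    by_contra hnadj
    have h4 := posSet_card_lower2 hE Z Q hnd hperm a ha u hu hune hnadj
    have h5 := hδlb a
    rw [hQ4] at h4
    omega
  · intro u hu hune
    by_contra hnadj
    have h4 := posSet_card_lower2 hE Z Q hnd hperm b hb u hu hune hnadj
    have h5 := hδlb b
    rw [hQ4] at h4
    omega

end Rigidity
section Special

open Classical in
lemma special4 {n δ : ℕ} {E R : Fin n → Fin n → Prop} (hE : Oriented E)
    (hδlb : ∀ x : Fin n, δ ≤ udeg E x) (hδ : n + 2 ≤ 2 * δ)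
    (hRa : ∀ a b : Fin n, R a b → UAdj E a b)
    (hRb : ∀ a b : Fin n, UAdj E a b → R a b ∨ R b a)
    (hRc : ∀ a b : Fin n, R a b → ¬ R b a)
    (Z Q : List (Fin n)) (hQ4 : Q.length = 4)
    (hnd : (Z ++ Q).Nodup) (hperm : (Z ++ Q).Perm (List.finRange n))
    (hZna : ccount (NAdj E) Z = 0) (hQna : pcount (NAdj E) Q = 0)
    (hZ3 : 3 ≤ Z.length) (hδ5 : 5 ≤ δ) (hQ1 : pcount R Q = 1) :
    ∃ L : List (Fin n), L.Perm (List.finRange n) ∧ ccount (NAdj E) L = 0 ∧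
      ccount R L ≤ ccount R Z + 4 := by
  classical
  haveI : NeZero Z.length := ⟨by omega⟩
  obtain ⟨u1, u2, u3, u4, rfl⟩ : ∃ a b c d, Q = [a, b, c, d] := by
    match Q, hQ4 with
    | [a, b, c, d], _ => exact ⟨a, b, c, d, rfl⟩
  rw [pcount4] at hQna hQ1
  have h12 : UAdj E u1 u2 := by
    have h : ecnt (NAdj E) u1 u2 = 0 := by omega
    exact not_not.1 ((ecnt_zero_iff _ _ _).1 h)
  have h23 : UAdj E u2 u3 := by
    have h : ecnt (NAdj E) u2 u3 = 0 := by omega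
    exact not_not.1 ((ecnt_zero_iff _ _ _).1 h)
  have h34 : UAdj E u3 u4 := by
    have h : ecnt (NAdj E) u3 u4 = 0 := by omega
    exact not_not.1 ((ecnt_zero_iff _ _ _).1 h)
  have hQnd : ([u1,u2,u3,u4] : List (Fin n)).Nodup := hnd.of_append_right
  have hQna' : pcount (NAdj E) [u1,u2,u3,u4] = 0 := pna4 h12 h23 h34
  have hne : u1 ≠ u2 ∧ u1 ≠ u3 ∧ u1 ≠ u4 ∧ u2 ≠ u3 ∧ u2 ≠ u4 ∧ u3 ≠ u4 := by
    simp [List.nodup_cons] at hQnd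
    tauto
  obtain ⟨n12, n13, n14, n23, n24, n34⟩ := hne
  -- generic insertion on a successful test
  have build : ∀ (O : List (Fin n)) (v w : Fin n), O.Perm [u1,u2,u3,u4] →
      O.head? = some v → O.getLast? = some w →
      pcount (NAdj E) O = 0 → pcount R O ≤ 2 →
      (∃ i : ZMod Z.length, i ∈ posSet E Z v ∧ i + 1 ∈ posSet E Z w) →
      (∃ L : List (Fin n), L.Perm (List.finRange n) ∧ ccount (NAdj E) L = 0 ∧
        ccount R L ≤ ccount R Z + 4) := by
    intro O v w hOp hhead hlast hOna hOle htst
    have hOne : O ≠ [] := by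
      intro h
      rw [h] at hhead
      simp at hhead
    have hveq : O.head hOne = v := by
      have h1 := List.head?_eq_head hOne
      rw [hhead] at h1
      exact (Option.some.inj h1).symm
    have hweq : O.getLast hOne = w := by
      have h1 := List.getLast?_eq_getLast hOne
      rw [hlast] at h1
      exact (Option.some.inj h1).symm
    obtain ⟨i, hi1, hi2⟩ := htst
    have hx : UAdj E (O.head hOne) (zget Z i) := by
      rw [hveq]
      exact mem_posSet.1 hi1
    have hy : UAdj E (O.getLast hOne) (zget Z (i + ((1 : ℕ) : ZMod Z.length))) := by
      rw [hweq, Nat.cast_one]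
      exact mem_posSet.1 hi2
    obtain ⟨Z', S, hps, hz'na, hsna, hslen, hzlen', hbound⟩ :=
      splice_step R Z O hOne hZna hOna i 1 (le_refl 1) (by omega) hx hy
    have hS : S = [] := List.length_eq_zero_iff.1 (by omega)
    subst hS
    refine ⟨Z', ?_, hz'na, ?_⟩
    · have h1 : Z'.Perm (Z ++ O) := by simpa using hps
      exact h1.trans ((List.Perm.append_left Z hOp).trans hperm)
    · have h0 : pcount R ([] : List (Fin n)) = 0 := by simp
      omega
  -- pair (u1, u4)
  by_cases t14 : ∃ i : ZMod Z.length, i ∈ posSet E Z u1 ∧ i + 1 ∈ posSet E Z u4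
  · refine build [u1,u2,u3,u4] u1 u4 (List.Perm.refl _) rfl (by simp) hQna' ?_ t14
    rw [pcount4]
    omega
  by_cases t41 : ∃ i : ZMod Z.length, i ∈ posSet E Z u4 ∧ i + 1 ∈ posSet E Z u1
  · refine build [u4,u3,u2,u1] u4 u1 ?_ rfl (by simp)
      (pna4 (uadj_symm h34) (uadj_symm h23) (uadj_symm h12)) ?_ t41
    · refine List.perm_iff_count.2 fun s => ?_
      simp [List.count_cons]
      try ring
    · rw [pcount4]
      have e1 := ecnt_add_flip (hRb u1 u2 h12) (fun h => hRc _ _ h.1 h.2)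
      have e2 := ecnt_add_flip (hRb u2 u3 h23) (fun h => hRc _ _ h.1 h.2)
      have e3 := ecnt_add_flip (hRb u3 u4 h34) (fun h => hRc _ _ h.1 h.2)
      have hf : ∀ a b : Fin n, ecnt (fun x y : Fin n => R y x) a b = ecnt R b a := fun _ _ => rfl
      simp only [hf] at e1 e2 e3
      omega
  obtain ⟨r14a, r14b, adj1, adj4⟩ :=
    rigidity hE hδlb hδ Z [u1,u2,u3,u4] hnd hperm (by simp)
      (show u1 ∈ [u1,u2,u3,u4] by simp) (show u4 ∈ [u1,u2,u3,u4] by simp) t14 t41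
  have a13 : UAdj E u1 u3 := adj1 u3 (by simp) (fun h => n13 h.symm)
  have a14 : UAdj E u1 u4 := adj1 u4 (by simp) (fun h => n14 h.symm)
  have a42 : UAdj E u4 u2 := adj4 u2 (by simp) n24
  -- pair (u2, u3)
  by_cases t23 : ∃ i : ZMod Z.length, i ∈ posSet E Z u2 ∧ i + 1 ∈ posSet E Z u3
  · rcases pcount4_le_two_or R u2 u1 u4 u3 with hle | hall
    · refine build [u2,u1,u4,u3] u2 u3 ?_ rfl (by simp)
        (pna4 (uadj_symm h12) a14 (uadj_symm h34)) hle t23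
      refine List.perm_iff_count.2 fun s => ?_
      simp [List.count_cons]
      try ring
    · rcases pcount4_le_two_or R u2 u4 u1 u3 with hle2 | hall2
      · refine build [u2,u4,u1,u3] u2 u3 ?_ rfl (by simp)
          (pna4 (uadj_symm a42) (uadj_symm a14) a13) hle2 t23
        refine List.perm_iff_count.2 fun s => ?_
        simp [List.count_cons]
        try ring
      · exact absurd hall2.2.1 (hRc _ _ hall.2.1)
  by_cases t32 : ∃ i : ZMod Z.length, i ∈ posSet E Z u3 ∧ i + 1 ∈ posSet E Z u2
  · rcases pcount4_le_two_or R u3 u4 u1 u2 with hle | hall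
    · refine build [u3,u4,u1,u2] u3 u2 ?_ rfl (by simp)
        (pna4 h34 (uadj_symm a14) h12) hle t32
      refine List.perm_iff_count.2 fun s => ?_
      simp [List.count_cons]
      try ring
    · rcases pcount4_le_two_or R u3 u1 u4 u2 with hle2 | hall2
      · refine build [u3,u1,u4,u2] u3 u2 ?_ rfl (by simp)
          (pna4 (uadj_symm a13) a14 a42) hle2 t32
        refine List.perm_iff_count.2 fun s => ?_
        simp [List.count_cons]
        try ring
      · exact absurd hall2.2.1 (hRc _ _ hall.2.1)
  obtain ⟨r23a, r23b, adj2, adj3⟩ :=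
    rigidity hE hδlb hδ Z [u1,u2,u3,u4] hnd hperm (by simp)
      (show u2 ∈ [u1,u2,u3,u4] by simp) (show u3 ∈ [u1,u2,u3,u4] by simp) t23 t32
  -- pair (u1, u2)
  by_cases t12 : ∃ i : ZMod Z.length, i ∈ posSet E Z u1 ∧ i + 1 ∈ posSet E Z u2
  · rcases pcount4_le_two_or R u1 u4 u3 u2 with hle | hall
    · refine build [u1,u4,u3,u2] u1 u2 ?_ rfl (by simp)
        (pna4 a14 (uadj_symm h34) (uadj_symm h23)) hle t12
      refine List.perm_iff_count.2 fun s => ?_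
      simp [List.count_cons]
      try ring
    · rcases pcount4_le_two_or R u1 u3 u4 u2 with hle2 | hall2
      · refine build [u1,u3,u4,u2] u1 u2 ?_ rfl (by simp)
          (pna4 a13 h34 a42) hle2 t12
        refine List.perm_iff_count.2 fun s => ?_
        simp [List.count_cons]
        try ring
      · exact absurd hall2.2.1 (hRc _ _ hall.2.1)
  by_cases t21 : ∃ i : ZMod Z.length, i ∈ posSet E Z u2 ∧ i + 1 ∈ posSet E Z u1
  · rcases pcount4_le_two_or R u2 u3 u4 u1 with hle | hall
    · refine build [u2,u3,u4,u1] u2 u1 ?_ rfl (by simp)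
        (pna4 h23 h34 (uadj_symm a14)) hle t21
      refine List.perm_iff_count.2 fun s => ?_
      simp [List.count_cons]
      try ring
    · rcases pcount4_le_two_or R u2 u4 u3 u1 with hle2 | hall2
      · refine build [u2,u4,u3,u1] u2 u1 ?_ rfl (by simp)
          (pna4 (uadj_symm a42) (uadj_symm h34) (uadj_symm a13)) hle2 t21
        refine List.perm_iff_count.2 fun s => ?_
        simp [List.count_cons]
        try ring
      · exact absurd hall.2.1 (hRc _ _ hall2.2.1)
  obtain ⟨r12a, r12b, _, _⟩ :=
    rigidity hE hδlb hδ Z [u1,u2,u3,u4] hnd hperm (by simp)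
      (show u1 ∈ [u1,u2,u3,u4] by simp) (show u2 ∈ [u1,u2,u3,u4] by simp) t12 t21
  -- pair (u1, u3)
  by_cases t13 : ∃ i : ZMod Z.length, i ∈ posSet E Z u1 ∧ i + 1 ∈ posSet E Z u3
  · rcases pcount4_le_two_or R u1 u2 u4 u3 with hle | hall
    · refine build [u1,u2,u4,u3] u1 u3 ?_ rfl (by simp)
        (pna4 h12 (uadj_symm a42) (uadj_symm h34)) hle t13
      refine List.perm_iff_count.2 fun s => ?_
      simp [List.count_cons]
      try ring
    · rcases pcount4_le_two_or R u1 u4 u2 u3 with hle2 | hall2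
      · refine build [u1,u4,u2,u3] u1 u3 ?_ rfl (by simp)
          (pna4 a14 a42 h23) hle2 t13
        refine List.perm_iff_count.2 fun s => ?_
        simp [List.count_cons]
        try ring
      · exact absurd hall2.2.1 (hRc _ _ hall.2.1)
  by_cases t31 : ∃ i : ZMod Z.length, i ∈ posSet E Z u3 ∧ i + 1 ∈ posSet E Z u1
  · rcases pcount4_le_two_or R u3 u4 u2 u1 with hle | hall
    · refine build [u3,u4,u2,u1] u3 u1 ?_ rfl (by simp)
        (pna4 h34 a42 (uadj_symm h12)) hle t31
      refine List.perm_iff_count.2 fun s => ?_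
      simp [List.count_cons]
      try ring
    · rcases pcount4_le_two_or R u3 u2 u4 u1 with hle2 | hall2
      · refine build [u3,u2,u4,u1] u3 u1 ?_ rfl (by simp)
          (pna4 (uadj_symm h23) (uadj_symm a42) (uadj_symm a14)) hle2 t31
        refine List.perm_iff_count.2 fun s => ?_
        simp [List.count_cons]
        try ring
      · exact absurd hall.2.1 (hRc _ _ hall2.2.1)
  obtain ⟨r13a, r13b, _, _⟩ :=
    rigidity hE hδlb hδ Z [u1,u2,u3,u4] hnd hperm (by simp)
      (show u1 ∈ [u1,u2,u3,u4] by simp) (show u3 ∈ [u1,u2,u3,u4] by simp) t13 t31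
  -- all position sets coincide
  have hinj : Function.Injective (fun x : ZMod Z.length => x + 1) := fun x y h => by
    simpa using h
  have h32' : posSet E Z u3 = posSet E Z u2 :=
    Finset.image_injective hinj (r13b.trans r12b.symm)
  have h42' : posSet E Z u4 = posSet E Z u2 :=
    Finset.image_injective hinj (r14b.trans r12b.symm)
  have hSshift : (posSet E Z u2).image (· + 1) = (posSet E Z u2)ᶜ := by
    have h := r23b
    rwa [h32'] at h
  have h12' : posSet E Z u1 = posSet E Z u2 := by
    have hc : (posSet E Z u1)ᶜ = (posSet E Z u2)ᶜ := r12b.symm.trans hSshift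
    have h6 := congrArg (fun s : Finset (ZMod Z.length) => sᶜ) hc
    simpa [compl_compl] using h6
  have hPall : ∀ v, v ∈ ([u1,u2,u3,u4] : List (Fin n)) → posSet E Z v = posSet E Z u2 := by
    intro v hv
    simp at hv
    rcases hv with rfl | rfl | rfl | rfl
    · exact h12'
    · rfl
    · exact h32'
    · exact h42'
  have hcard2 : δ ≤ (posSet E Z u2).card + 3 := by
    have h2 := posSet_card_lower hE Z [u1,u2,u3,u4] hnd hperm u2 (by simp)
    simp at h2
    exact le_trans (hδlb u2) h2
  have hS0ne : (posSet E Z u2).Nonempty := Finset.card_pos.1 (by omega)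
  obtain ⟨j, hj⟩ := hS0ne
  have hj1 : j + 1 ∉ posSet E Z u2 := by
    have h7 : j + 1 ∈ (posSet E Z u2)ᶜ := by
      rw [← hSshift]
      exact Finset.mem_image_of_mem _ hj
    exact Finset.mem_compl.1 h7
  have hj2 : j + 2 ∈ posSet E Z u2 := by
    have h5 : ((posSet E Z u2)ᶜ).image (· + 1) = posSet E Z u2 := by
      rw [shift_compl, hSshift, compl_compl]
    have h6 : (j + 1) + 1 ∈ ((posSet E Z u2)ᶜ).image (· + 1) :=
      Finset.mem_image_of_mem _ (Finset.mem_compl.2 hj1)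
    rw [h5] at h6
    have h8 : j + 1 + 1 = j + 2 := by ring
    rwa [h8] at h6
  have htot : ∀ x y : Fin n, x ∈ ([u1,u2,u3,u4] : List (Fin n)) →
      y ∈ ([u1,u2,u3,u4] : List (Fin n)) → x ≠ y → R x y ∨ R y x := by
    intro x y hx hy hxy
    simp at hx hy
    have hadj : UAdj E x y := by
      rcases hx with rfl | rfl | rfl | rfl <;> rcases hy with rfl | rfl | rfl | rfl <;>
        first
          | exact absurd rfl hxy
          | exact h12
          | exact uadj_symm h12
          | exact a13
          | exact uadj_symm a13
          | exact a14
          | exact uadj_symm a14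
          | exact h23
          | exact uadj_symm h23
          | exact uadj_symm a42
          | exact a42
          | exact h34
          | exact uadj_symm h34
    exact hRb x y hadj
  obtain ⟨a, b, c, d, hOperm, rba, rcb, rdc⟩ := redei4 u1 u2 u3 u4 htot hQnd
  have hOna : pcount (NAdj E) [a,b,c,d] = 0 :=
    pna4 (uadj_symm (hRa _ _ rba)) (uadj_symm (hRa _ _ rcb)) (uadj_symm (hRa _ _ rdc))
  have hO0 : pcount R [a,b,c,d] = 0 := by
    rw [pcount4, ecnt_eq_zero (hRc _ _ rba), ecnt_eq_zero (hRc _ _ rcb),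
      ecnt_eq_zero (hRc _ _ rdc)]
  have hmema : a ∈ ([u1,u2,u3,u4] : List (Fin n)) := hOperm.mem_iff.1 (by simp)
  have hmemd : d ∈ ([u1,u2,u3,u4] : List (Fin n)) := hOperm.mem_iff.1 (by simp)
  have hOne : ([a,b,c,d] : List (Fin n)) ≠ [] := by simp
  have hja : j ∈ posSet E Z a := by
    rw [hPall a hmema]
    exact hj
  have hjd : j + ((2 : ℕ) : ZMod Z.length) ∈ posSet E Z d := by
    rw [hPall d hmemd]
    have h9 : ((2 : ℕ) : ZMod Z.length) = 2 := by norm_cast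
    rw [h9]
    exact hj2
  have hx : UAdj E (([a,b,c,d] : List (Fin n)).head hOne) (zget Z j) := by
    show UAdj E a (zget Z j)
    exact mem_posSet.1 hja
  have hy2 : UAdj E (([a,b,c,d] : List (Fin n)).getLast hOne)
      (zget Z (j + ((2 : ℕ) : ZMod Z.length))) := by
    have hlast : ([a,b,c,d] : List (Fin n)).getLast hOne = d := by
      simp [List.getLast]
    rw [hlast]
    exact mem_posSet.1 hjd
  obtain ⟨Z₂, S₂, hps, hz2na, hs2na, hs2len, hz2len, hbound2⟩ :=
    splice_step R Z [a,b,c,d] hOne hZna hOna j 2 (by omega) (by omega) hx hy2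
  obtain ⟨w, rfl⟩ : ∃ w, S₂ = [w] := by
    match S₂, hs2len with
    | [w], _ => exact ⟨w, rfl⟩
  have hlen4 : ([a,b,c,d] : List (Fin n)).length = 4 := rfl
  rw [hlen4] at hz2len
  have hOQperm : (Z ++ [a,b,c,d]).Perm (Z ++ [u1,u2,u3,u4]) := List.Perm.append_left Z hOperm
  have hnd2 : (Z₂ ++ [w]).Nodup := (hps.trans hOQperm).nodup_iff.2 hnd
  have hperm2 : (Z₂ ++ [w]).Perm (List.finRange n) := (hps.trans hOQperm).trans hperm
  obtain ⟨L, hL1, hL2, hL3⟩ :=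
    master (R := R) hE hδlb hδ 1 Z₂ [w] rfl hnd2 hperm2 hz2na hs2na (by omega) (by omega)
  refine ⟨L, hL1, hL2, ?_⟩
  have hw0 : pcount R [w] = 0 := rfl
  have hdv : (2:ℕ) * ((1 + 2)/3) = 2 := by norm_num
  omega

end Special
section FinalAux

lemma pcount_congr {V : Type*} {R1 R2 : V → V → Prop} (h : ∀ a b, R1 a b ↔ R2 a b) :
    ∀ l : List V, pcount R1 l = pcount R2 l := by
  intro l
  induction l with
  | nil => simp
  | cons a l ih =>
    cases l with
    | nil => simp
    | cons b l' =>
      rw [pcount_cons_cons, pcount_cons_cons, ih]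
      have he : ecnt R1 a b = ecnt R2 a b := by
        by_cases hab : R1 a b
        · rw [ecnt_eq_one hab, ecnt_eq_one ((h a b).1 hab)]
        · rw [ecnt_eq_zero hab, ecnt_eq_zero (fun h2 => hab ((h a b).2 h2))]
      rw [he]

end FinalAux

/-- **Lemma 2.1.** `δ(G) ≥ n/2 + 1`, `P` a path and `C` a cycle, vertex-disjoint
and spanning, with `σ_min(P) ≤ 1` and `2 ≤ |P| < δ(G)`. If `σ_min(C) ≤ ℓ - |P|`,
then `G` has a Hamilton cycle `C*` with `σ_min(C*) ≤ ℓ`. Here `|P| = m + 1`. -/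
theorem path_cycle_lemma (n ℓ δ m : ℕ)
    (E : Fin n → Fin n → Prop) (hE : Oriented E)
    (hδlb : ∀ x : Fin n, δ ≤ udeg E x) (hδ : n + 2 ≤ 2 * δ)
    (p : Fin (m + 1) → Fin n) (hp : IsPathOn E p)
    (hpσ : sigmaMinPath E p ≤ 1)
    (hP1 : 2 ≤ m + 1) (hP2 : m + 1 < δ)
    (c : Fin (n - (m + 1)) → Fin n) (hc : IsCycleOn E c)
    (hdisj : ∀ i j, c i ≠ p j)
    (hcover : ∀ x : Fin n, (∃ i, c i = x) ∨ (∃ j, p j = x))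
    (hσC : sigmaMinCyc E c + (m + 1) ≤ ℓ) :
    ∃ C : Fin n → Fin n, IsHamCycle E C ∧ sigmaMinHC E C ≤ ℓ := by
  classical
  obtain ⟨hq3, hcinj, hcadj⟩ := hc
  obtain ⟨hpinj, hpadj⟩ := hp
  have hn4 : m + 4 ≤ n := by omega
  set lC := List.ofFn c with hlC
  set lP := List.ofFn p with hlP
  have hndC : lC.Nodup := List.nodup_ofFn.2 hcinj
  have hndP : lP.Nodup := List.nodup_ofFn.2 hpinj
  have hdisj' : lC.Disjoint lP := by
    intro x hxC hxP
    rw [hlC, List.mem_ofFn] at hxC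
    rw [hlP, List.mem_ofFn] at hxP
    obtain ⟨i, hi⟩ := hxC
    obtain ⟨j, hj⟩ := hxP
    exact hdisj i j (hi.trans hj.symm)
  have hnd : (lC ++ lP).Nodup := List.nodup_append.2 ⟨hndC, hndP, fun a ha b hb h => hdisj' ha (h ▸ hb)⟩
  have hperm : (lC ++ lP).Perm (List.finRange n) := by
    refine List.perm_of_nodup_nodup_toFinset_eq hnd (List.nodup_finRange n) ?_
    ext x
    simp only [List.mem_toFinset, List.mem_append, hlC, hlP, List.mem_ofFn,
      List.mem_finRange, iff_true]
    rcases hcover x with ⟨i, hi⟩ | ⟨j, hj⟩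
    · exact Or.inl ⟨i, hi⟩
    · exact Or.inr ⟨j, hj⟩
  have hlCl : lC.length = n - (m+1) := by simp [hlC]
  have hlPl : lP.length = m + 1 := by simp [hlP]
  have hCna : ccount (NAdj E) lC = 0 := by
    rw [hlC, ← natcard_eq_ccount (NAdj E) (by omega) c]
    have hE1 : IsEmpty {i // NAdj E (c i) (c (cnext i))} := ⟨fun ⟨i, hi⟩ => hi (hcadj i)⟩
    exact Nat.card_of_isEmpty
  have hPna : pcount (NAdj E) lP = 0 := by
    rw [hlP, ← natcard_eq_pcount (NAdj E) p]
    have hE1 : IsEmpty {i : Fin m // NAdj E (p i.castSucc) (p i.succ)} :=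
      ⟨fun ⟨i, hi⟩ => hi (hpadj i)⟩
    exact Nat.card_of_isEmpty
  have hsp : sigmaPlusPath E p = pcount E lP := natcard_eq_pcount E p
  have hsm : sigmaMinusPath E p = pcount (fun a b => E b a) lP :=
    natcard_eq_pcount (fun a b => E b a) p
  have hcp : sigmaPlusCyc E c = ccount E lC := natcard_eq_ccount E (by omega) c
  have hcm : sigmaMinusCyc E c = ccount (fun a b => E b a) lC :=
    natcard_eq_ccount (fun a b => E b a) (by omega) c
  have hPne : lP ≠ [] := by
    intro h
    rw [h] at hlPl
    simp at hlPl
  have hsum : sigmaPlusPath E p + sigmaMinusPath E p = m := by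
    have h1 := pcount_add_flip (R := E)
      (fun a b h => not_not.1 h) (fun a b h => hE a b h.1 h.2) lP hPne hPna
    rw [hlPl] at h1
    rw [hsp, hsm]
    omega
  have hrevNa : pcount (NAdj E) lP.reverse = 0 := by
    rw [pcount_reverse]
    rw [pcount_congr (R2 := NAdj E) (fun a b => by
      unfold NAdj UAdj
      rw [or_comm])]
    exact hPna
  have key : ∀ R : Fin n → Fin n → Prop,
      (∀ a b : Fin n, R a b → UAdj E a b) →
      (∀ a b : Fin n, UAdj E a b → R a b ∨ R b a) →
      (∀ a b : Fin n, R a b → ¬ R b a) →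
      ccount R lC = sigmaMinCyc E c →
      (∀ L : List (Fin n), min (ccount E L) (ccount (fun a b => E b a) L) ≤ ccount R L) →
      (min (pcount R lP) (pcount (fun a b => R b a) lP) = sigmaMinPath E p) →
      ∃ C : Fin n → Fin n, IsHamCycle E C ∧ sigmaMinHC E C ≤ ℓ := by
    intro R hRa hRb hRc hRcyc hRmin hRpath
    obtain ⟨lQ, hQperm, hQna, hQcnt⟩ : ∃ lQ : List (Fin n), lQ.Perm lP ∧
        pcount (NAdj E) lQ = 0 ∧ pcount R lQ = sigmaMinPath E p := by
      by_cases hdir : pcount R lP ≤ pcount (fun a b => R b a) lP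
      · exact ⟨lP, List.Perm.refl _, hPna, by rw [← hRpath, min_eq_left hdir]⟩
      · refine ⟨lP.reverse, List.reverse_perm lP, ?_, ?_⟩
        · exact hrevNa
        · rw [pcount_reverse, ← hRpath, min_eq_right (le_of_not_ge hdir)]
    have hndQ : (lC ++ lQ).Nodup := (List.Perm.append_left lC hQperm).nodup_iff.2 hnd
    have hpermQ : (lC ++ lQ).Perm (List.finRange n) :=
      (List.Perm.append_left lC hQperm).trans hperm
    have hlQl : lQ.length = m + 1 := hQperm.length_eq.trans hlPl
    by_cases hspec : m = 3 ∧ sigmaMinPath E p = 1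
    · obtain ⟨L, hL1, hL2, hL3⟩ := special4 (R := R) hE hδlb hδ hRa hRb hRc lC lQ
        (by omega) hndQ hpermQ hCna hQna (by omega) (by omega)
        (by rw [hQcnt, hspec.2])
      obtain ⟨C₀, hham, hplus, hminus⟩ := list_to_ham L hL1 hL2 (by omega)
      refine ⟨C₀, hham, ?_⟩
      have h1 : sigmaMinHC E C₀ ≤ ccount R L := by
        rw [sigmaMinHC, hplus, hminus]
        exact hRmin L
      have h2 := hspec.1
      omega
    · have l1 : sigmaMinPath E p ≤ sigmaPlusPath E p := min_le_left _ _
      have l2 : sigmaMinPath E p ≤ sigmaMinusPath E p := min_le_right _ _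
      have hbud : sigmaMinPath E p + 2 * ((m + 1 + 2) / 3) ≤ m + 1 := by
        by_cases hm3 : m = 3
        · have : sigmaMinPath E p ≠ 1 := fun h => hspec ⟨hm3, h⟩
          omega
        · omega
      obtain ⟨L, hL1, hL2, hL3⟩ := master (R := R) hE hδlb hδ (m+1) lC lQ hlQl
        hndQ hpermQ hCna hQna (by omega) hP2
      obtain ⟨C₀, hham, hplus, hminus⟩ := list_to_ham L hL1 hL2 (by omega)
      refine ⟨C₀, hham, ?_⟩
      have h1 : sigmaMinHC E C₀ ≤ ccount R L := by
        rw [sigmaMinHC, hplus, hminus]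
        exact hRmin L
      omega
  rcases le_total (ccount E lC) (ccount (fun a b => E b a) lC) with hcy | hcy
  · refine key E (fun a b h => Or.inl h) (fun a b h => h) hE ?_ (fun L => min_le_left _ _) ?_
    · rw [sigmaMinCyc, hcp, hcm]
      exact (min_eq_left hcy).symm
    · rw [sigmaMinPath, hsp, hsm]
  · refine key (fun a b => E b a) (fun a b h => Or.inr h) (fun a b h => h.symm)
      (fun a b h hh => hE b a h hh) ?_ (fun L => min_le_right _ _) ?_
    · rw [sigmaMinCyc, hcp, hcm]
      exact (min_eq_right hcy).symm
    · rw [sigmaMinPath, hsp, hsm]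
      exact min_comm (pcount (fun a b => E b a) lP) (pcount E lP)
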